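/- Let p > 0 and a ∈ ℝ. For v > 0 with v^{αp} > |a|, the Sadik transform of φ(t) = E_{p,1}(a t^p) (i.e., the case m = 0, q = 1 of the Mittag-Leffler family) equals v^{α(p−1) − β} / (v^{αp} − a). -/

import Mathlib

open Real MeasureTheory

lemma sadik_aux_int (p s b : ℝ) (hp : 0 < p) (hs : 0 < s) (k : ℕ) :
    ∫ t in Set.Ioi (0:ℝ), Real.exp (-t * s) * ((b * t ^ p) ^ k / Real.Gamma (p * k + 1))
      = b ^ k * (1 / s) ^ (p * k + 1) := by
  have hpk : (0:ℝ) < p * k + 1 := by positivity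
  have hΓ : 0 < Real.Gamma (p * k + 1) := Real.Gamma_pos_of_pos hpk
  have hcongr : ∀ t ∈ Set.Ioi (0:ℝ),
      Real.exp (-t * s) * ((b * t ^ p) ^ k / Real.Gamma (p * k + 1)) =
      (b ^ k / Real.Gamma (p * k + 1)) * (t ^ (p * (k:ℝ) + 1 - 1) * Real.exp (-(s * t))) := by
    intro t ht
    have ht' : (0:ℝ) ≤ t := le_of_lt ht
    have h1 : p * (k:ℝ) + 1 - 1 = p * (k:ℝ) := by ring
    have hk : t ^ (p * (k:ℝ)) = (t ^ p) ^ k := by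
      rw [Real.rpow_mul ht', Real.rpow_natCast]
    rw [h1, hk, mul_pow, neg_mul, mul_comm t s, ← neg_mul, neg_mul]
    ring
  rw [MeasureTheory.setIntegral_congr_fun measurableSet_Ioi hcongr,
    MeasureTheory.integral_const_mul, integral_rpow_mul_exp_neg_mul_Ioi hpk hs]
  field_simp

lemma sadik_aux_integrable (p s b : ℝ) (hp : 0 < p) (hs : 0 < s) (k : ℕ) :
    MeasureTheory.IntegrableOn
      (fun t : ℝ => Real.exp (-t * s) * ((b * t ^ p) ^ k / Real.Gamma (p * k + 1)))
      (Set.Ioi 0) := by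
  have base : MeasureTheory.IntegrableOn
      (fun t : ℝ => t ^ (p * (k:ℝ)) * Real.exp (-s * t ^ (1:ℝ))) (Set.Ioi 0) :=
    integrableOn_rpow_mul_exp_neg_mul_rpow
      (by
        have h0 : (0:ℝ) ≤ p * k := by positivity
        linarith) zero_lt_one hs
  refine MeasureTheory.IntegrableOn.congr_fun
    (base.const_mul (b ^ k / Real.Gamma (p * k + 1))) ?_ measurableSet_Ioi
  intro t ht
  have ht' : (0:ℝ) ≤ t := le_of_lt ht
  have hk : t ^ (p * (k:ℝ)) = (t ^ p) ^ k := by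
    rw [Real.rpow_mul ht', Real.rpow_natCast]
  simp only [Real.rpow_one]
  rw [hk, mul_pow, neg_mul, mul_comm s t, ← neg_mul, neg_mul]
  ring

lemma sadik_aux_pow (p s b : ℝ) (hs : 0 < s) (k : ℕ) :
    b ^ k * (1 / s) ^ (p * k + 1) = (b * (1 / s) ^ p) ^ k * (1 / s) := by
  have h1 : (0:ℝ) < 1 / s := by positivity
  have hk : (1 / s) ^ (p * (k:ℝ)) = ((1 / s) ^ p) ^ k := by
    rw [Real.rpow_mul h1.le, Real.rpow_natCast]
  rw [Real.rpow_add h1, Real.rpow_one, hk, mul_pow]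
  ring

/-- Sadik transform of `E_{p,1}(a t^p)` equals `v^{α(p-1)-β} / (v^{αp} - a)`. -/
theorem sadik_transform_mittagLeffler_one (p a α β v : ℝ)
    (hp : 0 < p) (hα : α ≠ 0) (hv : 0 < v)
    (hva : |a| < v ^ (α * p)) :
    v ^ (-β) * ∫ t in Set.Ioi (0:ℝ),
        Real.exp (-t * v ^ α) *
          (∑' k : ℕ, (a * t ^ p) ^ k / Real.Gamma (p * k + 1)) =
      v ^ (α * (p - 1) - β) / (v ^ (α * p) - a) := by
  set s : ℝ := v ^ α with hs_def
  have hs : 0 < s := Real.rpow_pos_of_pos hv α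
  have hsp_eq : v ^ (α * p) = s ^ p := Real.rpow_mul hv.le α p
  have hva' : |a| < s ^ p := hsp_eq ▸ hva
  have hsp_pos : 0 < s ^ p := Real.rpow_pos_of_pos hs p
  have ha_lt : a < s ^ p := (abs_lt.mp hva').2
  have hne : s ^ p - a ≠ 0 := sub_ne_zero.mpr (ne_of_gt ha_lt)
  have h1p : (1 / s) ^ p = (s ^ p)⁻¹ := by
    rw [one_div, Real.inv_rpow hs.le]
  have hratio : |a * (1 / s) ^ p| < 1 := by
    rw [h1p, abs_mul, abs_of_pos (inv_pos.mpr hsp_pos), ← div_eq_mul_inv]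
    exact (div_lt_one hsp_pos).mpr hva'
  set F : ℕ → ℝ → ℝ := fun k t =>
    Real.exp (-t * s) * ((a * t ^ p) ^ k / Real.Gamma (p * k + 1)) with hF_def
  have hF_int : ∀ k, Integrable (F k) (volume.restrict (Set.Ioi (0:ℝ))) := fun k =>
    sadik_aux_integrable p s a hp hs k
  have hnorm : ∀ k : ℕ, (∫ t in Set.Ioi (0:ℝ), ‖F k t‖)
      = |a| ^ k * (1 / s) ^ (p * k + 1) := by
    intro k
    have hΓ : 0 < Real.Gamma (p * k + 1) := Real.Gamma_pos_of_pos (by positivity)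
    rw [← sadik_aux_int p s |a| hp hs k]
    refine MeasureTheory.setIntegral_congr_fun measurableSet_Ioi (fun t ht => ?_)
    have htp : 0 < t ^ p := Real.rpow_pos_of_pos ht p
    simp only [hF_def, Real.norm_eq_abs, abs_mul, abs_div, abs_pow, abs_mul,
      abs_of_pos (Real.exp_pos _), abs_of_pos hΓ, abs_of_pos htp]
  have hsum : Summable fun k : ℕ => ∫ t in Set.Ioi (0:ℝ), ‖F k t‖ := by
    simp only [hnorm]
    simp only [fun k => sadik_aux_pow p s |a| hs k]
    refine Summable.mul_right _ (summable_geometric_of_norm_lt_one ?_)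
    rw [Real.norm_eq_abs, abs_mul, abs_abs, ← abs_mul]
    exact hratio
  have hinterchange : (∫ t in Set.Ioi (0:ℝ),
      Real.exp (-t * s) * (∑' k : ℕ, (a * t ^ p) ^ k / Real.Gamma (p * k + 1)))
      = ∑' k : ℕ, ∫ t in Set.Ioi (0:ℝ), F k t := by
    rw [MeasureTheory.integral_tsum_of_summable_integral_norm hF_int hsum]
    refine MeasureTheory.setIntegral_congr_fun measurableSet_Ioi (fun t ht => ?_)
    simp only [hF_def]
    exact tsum_mul_left.symm
  have htsum : (∑' k : ℕ, ∫ t in Set.Ioi (0:ℝ), F k t)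
      = (1 - a * (1 / s) ^ p)⁻¹ * (1 / s) := by
    simp only [hF_def, fun k => sadik_aux_int p s a hp hs k,
      fun k => sadik_aux_pow p s a hs k]
    rw [tsum_mul_right, tsum_geometric_of_norm_lt_one (by rwa [Real.norm_eq_abs])]
  rw [hinterchange, htsum, hsp_eq, h1p]
  have h2 : v ^ (α * (p - 1) - β) = s ^ p / s * v ^ (-β) := by
    rw [show α * (p - 1) - β = α * (p - 1) + -β by ring, Real.rpow_add hv,
      Real.rpow_mul hv.le, ← hs_def, Real.rpow_sub hs, Real.rpow_one]
  rw [h2]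
  have hne2 : (1:ℝ) - a * (s ^ p)⁻¹ ≠ 0 := by
    have h3 : (1:ℝ) - a * (s ^ p)⁻¹ = (s ^ p - a) / s ^ p := by
      field_simp
    rw [h3]
    exact div_ne_zero hne hsp_pos.ne'
  field_simp
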